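/- Let R be a Boolean ring, I an ideal of R, and E a binary relation on R such that E f g implies (f+1)*g ∈ I. Let f, g ∈ R. If there exists h ∈ R with h ∈ Δ_f and h + 1 ∈ Δ_g (i.e., Δ_f ∩ (1 + Δ_g) is nonempty), then (f+1)*(g+1) ∈ I. -/

import Mathlib

private theorem desc_mem {R : Type*} [BooleanRing R] (I : Ideal R) (E : R → R → Prop)
    (hE : ∀ f g, E f g → (f + 1) * g ∈ I) (f : R) :
    ∀ p, Relation.ReflTransGen E f p → (f + 1) * p ∈ I := by
  intro p hp
  induction hp with
  | refl =>
    have : (f + 1) * f = 0 := by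
      linear_combination BooleanRing.mul_self f + BooleanRing.add_self f
    rw [this]; exact I.zero_mem
  | tail _ hedge ih =>
    rename_i b c _
    have key : (f + 1) * c = (f + 1) * ((b + 1) * c) + c * ((f + 1) * b) := by
      linear_combination (-(f*c) - c) * BooleanRing.add_self b
    rw [key]
    exact I.add_mem (I.mul_mem_left _ (hE _ _ hedge)) (I.mul_mem_left _ ih)

private theorem span_mem {R : Type*} [BooleanRing R] (I : Ideal R) (E : R → R → Prop)
    (hE : ∀ f g, E f g → (f + 1) * g ∈ I) (f : R) :
    ∀ h ∈ AddSubgroup.closure {p : R | Relation.ReflTransGen E f p}, (f + 1) * h ∈ I := by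
  intro h hh
  induction hh using AddSubgroup.closure_induction with
  | mem p hp => exact desc_mem I E hE f p hp
  | zero => simp only [mul_zero]; exact I.zero_mem
  | add a b _ _ ha hb => rw [mul_add]; exact I.add_mem ha hb
  | neg a _ ha => simpa using ha

/-- If `E` satisfies the edge property with respect to an ideal `I` of a
Boolean ring and there is `h` with `h ∈ Δ_f` and `h + 1 ∈ Δ_g`
(i.e. `Δ_f ∩ (1 + Δ_g) ≠ ∅`), then `(f+1)*(g+1) ∈ I`. -/
theorem descendant_spaces_intersect_neg (R : Type*) [BooleanRing R]
    (I : Ideal R) (E : R → R → Prop)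
    (hE : ∀ f g, E f g → (f + 1) * g ∈ I) (f g : R)
    (h : R)
    (hf : h ∈ AddSubgroup.closure {p : R | Relation.ReflTransGen E f p})
    (hg : h + 1 ∈ AddSubgroup.closure {p : R | Relation.ReflTransGen E g p}) :
    (f + 1) * (g + 1) ∈ I := by
  have h1 := span_mem I E hE f h hf
  have h2 := span_mem I E hE g (h + 1) hg
  have key : (f + 1) * (g + 1) = (g + 1) * ((f + 1) * h) + (f + 1) * ((g + 1) * (h + 1)) := by
    linear_combination (-(f+1)*(g+1)) * BooleanRing.add_self h
  rw [key]
  exact I.add_mem (I.mul_mem_left _ h1) (I.mul_mem_left _ h2)
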